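/- Let s > 0 and define u : (0, ∞) → ℝ by u(r) = (1/(8π r_0 √(Ds))) · [exp(−|r − r_0|·√(s/D)) + exp(−(r + r_0 − 2r_r)·√(s/D))] − (2β(s)/(β(s) + √(s/D))) · exp(−(r + r_0 − 2r_r)·√(s/D)) / (8π r_0 √(Ds)). Then u is differentiable at r = r_r and satisfies the Laplace-transformed Robin boundary condition u′(r_r) = (1 + r_r·k_1·s/(D·(s + k_{−1}))) · u(r_r)/r_r. -/

import Mathlib

noncomputable def uLaplace (D rr r0 k1 km1 s : ℝ) (r : ℝ) : ℝ :=
  (1 / (8 * Real.pi * r0 * Real.sqrt (D * s))) *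
      (Real.exp (-|r - r0| * Real.sqrt (s / D)) +
        Real.exp (-(r + r0 - 2 * rr) * Real.sqrt (s / D))) -
    (2 * (1 / rr + k1 * s / (D * (s + km1))) /
        ((1 / rr + k1 * s / (D * (s + km1))) + Real.sqrt (s / D))) *
      Real.exp (-(r + r0 - 2 * rr) * Real.sqrt (s / D)) /
      (8 * Real.pi * r0 * Real.sqrt (D * s))

/-- The Laplace transform `u(r) = r·C̃(r,s|r₀)` of the radial molecule distribution is
differentiable at `r = r_r` and satisfies the Laplace-transformed Robin boundary
condition `u′(r_r) = (1 + r_r k₁ s/(D(s+k₋₁))) u(r_r)/r_r`. -/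
theorem laplace_solution_satisfies_robin (D rr r0 k1 km1 s : ℝ)
    (hD : 0 < D) (hrr : 0 < rr) (hr0 : rr < r0) (hk1 : 0 ≤ k1) (hkm1 : 0 ≤ km1)
    (hs : 0 < s) :
    DifferentiableAt ℝ (uLaplace D rr r0 k1 km1 s) rr ∧
      deriv (uLaplace D rr r0 k1 km1 s) rr
        = (1 + rr * k1 * s / (D * (s + km1))) * uLaplace D rr r0 k1 km1 s rr / rr := by
  have hqpos : 0 < Real.sqrt (s / D) := Real.sqrt_pos.mpr (div_pos hs hD)
  have hβpos : 0 < 1 / rr + k1 * s / (D * (s + km1)) := by positivity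
  have hβq : (1 / rr + k1 * s / (D * (s + km1))) + Real.sqrt (s / D) ≠ 0 := by positivity
  set q := Real.sqrt (s / D) with hq
  set a := 1 / (8 * Real.pi * r0 * Real.sqrt (D * s)) with ha
  set β := 1 / rr + k1 * s / (D * (s + km1)) with hβ
  set B := 2 * β / (β + q) with hB
  set v : ℝ → ℝ := fun r =>
    a * (Real.exp ((r - r0) * q) + Real.exp (-(r + r0 - 2 * rr) * q)) -
      B * (Real.exp (-(r + r0 - 2 * rr) * q) * a) with hv
  have h1 : HasDerivAt (fun r : ℝ => (r - r0) * q) q rr := by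
    simpa using ((hasDerivAt_id rr).sub_const r0).mul_const q
  have h2 : HasDerivAt (fun r : ℝ => -(r + r0 - 2 * rr) * q) (-q) rr := by
    have h3 : HasDerivAt (fun r : ℝ => r + r0 - 2 * rr) 1 rr := by
      simpa using ((hasDerivAt_id rr).add_const r0).sub_const (2 * rr)
    simpa using (h3.neg.mul_const q)
  have hdv : HasDerivAt v
      (a * (Real.exp ((rr - r0) * q) * q + Real.exp (-(rr + r0 - 2 * rr) * q) * (-q)) -
        B * (Real.exp (-(rr + r0 - 2 * rr) * q) * (-q) * a)) rr :=
    (((h1.exp).add (h2.exp)).const_mul a).sub (((h2.exp).mul_const a).const_mul B)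
  have heq : uLaplace D rr r0 k1 km1 s =ᶠ[nhds rr] v := by
    filter_upwards [Iio_mem_nhds hr0] with r (hr : r < r0)
    simp only [uLaplace, hv, ← hq, ← ha, ← hβ, ← hB]
    rw [abs_of_neg (by linarith : r - r0 < 0)]
    ring_nf
    rw [ha]
    ring
  have hdu : HasDerivAt (uLaplace D rr r0 k1 km1 s) _ rr := hdv.congr_of_eventuallyEq heq
  refine ⟨hdu.differentiableAt, ?_⟩
  rw [hdu.deriv, heq.eq_of_nhds]
  have harg : -(rr + r0 - 2 * rr) * q = (rr - r0) * q := by ring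
  simp only [hv, harg]
  set E := Real.exp ((rr - r0) * q) with hE
  rw [hB]
  have hβ' : (1 : ℝ) + rr * k1 * s / (D * (s + km1)) = rr * β := by
    rw [hβ]; field_simp
  rw [hβ']
  have hrr' : rr ≠ 0 := ne_of_gt hrr
  have hβq' : β + q ≠ 0 := hβq
  field_simp
  ring
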